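/- Let σ be the sigmoid function. If β₁¹, β₁² ∈ ℝᵈ and β₀¹, β₀² ∈ ℝ and β₁* ∈ ℝᵈ, β₀* ∈ ℝ satisfy σ((β₁¹)ᵀx + β₀¹) + σ((β₁²)ᵀx + β₀²) = σ((β₁*)ᵀx + β₀*) for all x ∈ ℝᵈ, then β₁¹ = β₁² = β₁* = 0. -/
import Mathlib


/-- The sigmoid function `σ(z) = 1/(1+e^{-z})`. -/
noncomputable def sigmoid (z : ℝ) : ℝ := 1 / (1 + Real.exp (-z))

open Filter Topology

lemma sig_pos (z : ℝ) : 0 < sigmoid z := by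
  unfold sigmoid
  positivity

lemma sig_lt_one (z : ℝ) : sigmoid z < 1 := by
  unfold sigmoid
  rw [div_lt_one (by positivity)]
  linarith [Real.exp_pos (-z)]

lemma sig_top : Tendsto sigmoid atTop (nhds 1) := by
  have h1 : Tendsto (fun z : ℝ => Real.exp (-z)) atTop (nhds 0) :=
    Real.tendsto_exp_atBot.comp tendsto_neg_atTop_atBot
  have : Tendsto (fun z : ℝ => 1 / (1 + Real.exp (-z))) atTop (nhds (1 / (1 + 0))) :=
    tendsto_const_nhds.div (tendsto_const_nhds.add h1) (by norm_num)
  simpa using this.congr (fun z => by simp [sigmoid])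

lemma sig_bot : Tendsto sigmoid atBot (nhds 0) := by
  have h1 : Tendsto (fun z : ℝ => Real.exp (-z)) atBot atTop :=
    Real.tendsto_exp_atTop.comp tendsto_neg_atBot_atTop
  have h2 : Tendsto (fun z : ℝ => 1 + Real.exp (-z)) atBot atTop :=
    tendsto_atTop_add_const_left _ 1 h1
  have := h2.inv_tendsto_atTop
  exact this.congr (fun z => by simp [sigmoid, one_div])

lemma lim_aff_top (a c : ℝ) :
    Tendsto (fun t : ℝ => sigmoid (a * t + c)) atTop
      (nhds (if 0 < a then 1 else if a < 0 then 0 else sigmoid c)) := by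
  rcases lt_trichotomy a 0 with ha | ha | ha
  · rw [if_neg (by linarith), if_pos ha]
    exact sig_bot.comp (tendsto_atBot_add_const_right _ c
      ((tendsto_const_mul_atBot_of_neg ha).mpr tendsto_id))
  · subst ha
    simpa using tendsto_const_nhds (α := ℝ) (f := atTop) (a := sigmoid c)
  · rw [if_pos ha]
    exact sig_top.comp (tendsto_atTop_add_const_right _ c
      (tendsto_id.const_mul_atTop ha))

lemma lim_aff_bot (a c : ℝ) :
    Tendsto (fun t : ℝ => sigmoid (a * t + c)) atBot
      (nhds (if 0 < a then 0 else if a < 0 then 1 else sigmoid c)) := by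
  rcases lt_trichotomy a 0 with ha | ha | ha
  · rw [if_neg (by linarith), if_pos ha]
    exact sig_top.comp (tendsto_atTop_add_const_right _ c
      ((tendsto_const_mul_atTop_of_neg ha).mpr tendsto_id))
  · subst ha
    simpa using tendsto_const_nhds (α := ℝ) (f := atBot) (a := sigmoid c)
  · rw [if_pos ha]
    exact sig_bot.comp (tendsto_atBot_add_const_right _ c
      (tendsto_id.const_mul_atBot ha))

lemma key (a b s c1 c2 c3 : ℝ)
    (h : ∀ t : ℝ, sigmoid (a * t + c1) + sigmoid (b * t + c2) = sigmoid (s * t + c3)) :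
    a = 0 ∧ b = 0 ∧ s = 0 := by
  have Etop := tendsto_nhds_unique
    ((lim_aff_top a c1).add (lim_aff_top b c2))
    ((lim_aff_top s c3).congr (fun t => (h t).symm))
  have Ebot := tendsto_nhds_unique
    ((lim_aff_bot a c1).add (lim_aff_bot b c2))
    ((lim_aff_bot s c3).congr (fun t => (h t).symm))
  have p1 := sig_pos c1; have p2 := sig_pos c2; have p3 := sig_pos c3
  have q1 := sig_lt_one c1; have q2 := sig_lt_one c2; have q3 := sig_lt_one c3
  split_ifs at Etop Ebot <;>
    first
      | exact ⟨by linarith, by linarith, by linarith⟩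
      | (exfalso; linarith)

theorem stmt_6 (d : ℕ) (β₁a β₁b β₁s : Fin d → ℝ) (β₀a β₀b β₀s : ℝ)
    (h : ∀ x : Fin d → ℝ,
      sigmoid ((∑ i, β₁a i * x i) + β₀a) + sigmoid ((∑ i, β₁b i * x i) + β₀b)
        = sigmoid ((∑ i, β₁s i * x i) + β₀s)) :
    β₁a = 0 ∧ β₁b = 0 ∧ β₁s = 0 := by
  have main : ∀ i : Fin d, β₁a i = 0 ∧ β₁b i = 0 ∧ β₁s i = 0 := by
    intro i
    apply key (β₁a i) (β₁b i) (β₁s i) β₀a β₀b β₀s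
    intro t
    have hx := h (fun j => if j = i then t else 0)
    have hs : ∀ β : Fin d → ℝ, (∑ j, β j * (if j = i then t else 0)) = β i * t := by
      intro β
      simp [mul_ite, mul_zero]
    simpa [hs] using hx
  exact ⟨funext fun i => (main i).1, funext fun i => (main i).2.1,
    funext fun i => (main i).2.2⟩
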